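/- Let n and x be natural numbers with x ≤ n. Then for every real number a, J_n(a, x) = ((n+3)! / (x! (n−x)!)) · (1 − a) · (I_n(1 − a, n − x) − I_n(a, x)). -/

import Mathlib

/-- `I_n(a, x) = a^{x+2} ∫₀¹ t^{x+1} (1 − t) (1 − a t)^{n−x} dt`. -/
noncomputable def In (n x : ℕ) (a : ℝ) : ℝ :=
  a ^ (x + 2) * ∫ t in (0 : ℝ)..1, t ^ (x + 1) * (1 - t) * (1 - a * t) ^ (n - x)

/-- The polynomial `J_n(a, x)`. -/
noncomputable def Jn (n x : ℕ) (a : ℝ) : ℝ :=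
  2 * a ^ (x + 2) * ∑ r ∈ Finset.range (n - x + 1),
      ((n + 3).choose (n - x - r) : ℝ) * ((x + r).choose r : ℝ) * (-1) ^ r * a ^ r
    - ((n : ℝ) - x + 1) * ((n : ℝ) + 3) * a + ((n : ℝ) - x + 1) * ((x : ℝ) + 1)

open Finset intervalIntegral

/- ### Elementary integral computations -/

lemma intTP (p : ℕ) : ∫ t in (0:ℝ)..1, t ^ p * (1 - t) = 1/(p+1) - 1/(p+2) := by
  have h : ∀ t : ℝ, t ^ p * (1 - t) = t ^ p - t ^ (p + 1) := by intro t; ring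
  simp_rw [h]
  rw [intervalIntegral.integral_sub ((continuous_pow p).intervalIntegrable 0 1)
    ((continuous_pow (p+1)).intervalIntegrable 0 1), integral_pow, integral_pow]
  push_cast
  norm_num
  ring

lemma In_self (n : ℕ) (b : ℝ) : In n n b = b ^ (n + 2) / (((n:ℝ)+2) * ((n:ℝ)+3)) := by
  unfold In
  rw [Nat.sub_self]
  simp only [pow_zero, mul_one]
  rw [intTP (n+1)]
  have h2 : ((n:ℝ)+2) ≠ 0 := by positivity
  have h3 : ((n:ℝ)+3) ≠ 0 := by positivity
  push_cast
  field_simp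
  ring

lemma In_zero (n : ℕ) (a : ℝ) :
    In n 0 a = a ^ 2 * ∑ k ∈ Finset.range (n+1),
      (n.choose k : ℝ) * (-1)^k * a^k / (((k:ℝ)+2) * ((k:ℝ)+3)) := by
  unfold In
  rw [Nat.sub_zero]
  have h : ∀ t : ℝ, t ^ (0+1) * (1 - t) * (1 - a * t) ^ n
      = ∑ k ∈ Finset.range (n+1), ((n.choose k : ℝ) * (-1)^k * a^k) * (t^(k+1) * (1-t)) := by
    intro t
    rw [show (1 - a*t) = (-(a*t) + 1) by ring, add_pow, Finset.mul_sum]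
    refine Finset.sum_congr rfl fun k _ => ?_
    rw [neg_pow, mul_pow]
    ring
  simp_rw [h]
  rw [intervalIntegral.integral_finset_sum]
  · rw [show (0:ℕ)+2 = 2 from rfl]
    congr 1
    refine Finset.sum_congr rfl fun k _ => ?_
    rw [intervalIntegral.integral_const_mul, intTP (k+1)]
    have h2 : ((k:ℝ)+2) ≠ 0 := by positivity
    have h3 : ((k:ℝ)+3) ≠ 0 := by positivity
    push_cast
    field_simp
    ring
  · intro k _
    exact (Continuous.intervalIntegrable (by fun_prop) 0 1)

lemma In_rec (n x : ℕ) (h : x ≤ n) (a : ℝ) :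
    In (n+1) (x+1) a = In n x a - In (n+1) x a := by
  have key : In (n+1) x a = In n x a - In (n+1) (x+1) a := by
    unfold In
    have hnx : n + 1 - x = (n - x) + 1 := by omega
    have hsx : n + 1 - (x + 1) = n - x := by omega
    rw [hnx, hsx]
    have h1 : ∀ t : ℝ, t ^ (x+1) * (1 - t) * (1 - a * t) ^ ((n-x)+1)
        = t ^ (x+1) * (1 - t) * (1 - a * t) ^ (n-x)
          - a * (t ^ (x+2) * (1 - t) * (1 - a * t) ^ (n-x)) := by
      intro t; rw [pow_succ]; ring
    simp_rw [h1]
    rw [intervalIntegral.integral_sub (Continuous.intervalIntegrable (by fun_prop) 0 1)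
      (Continuous.intervalIntegrable (by fun_prop) 0 1),
      intervalIntegral.integral_const_mul]
    rw [show x+1+2 = (x+2)+1 from rfl, pow_succ]
    ring
  linarith

/- ### Combinatorial identities -/

lemma natkey1 (x r : ℕ) : (x+1) * ((x+r+1).choose r) = (r+1) * ((x+r+1).choose (r+1)) := by
  have h := Nat.choose_succ_right_eq (x+r+1) r
  have h2 : x+r+1-r = x+1 := by omega
  rw [h2] at h
  linarith

lemma natkey2 (N k : ℕ) : (N+1) * (N.choose k) = (k+1) * ((N+1).choose (k+1)) := by
  have h := Nat.add_one_mul_choose_eq N k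
  linarith

lemma rkey1 (x r : ℕ) : ((x:ℝ)+1) * ((x+1+r).choose r : ℝ) = ((r:ℝ)+1) * ((x+(r+1)).choose (r+1) : ℝ) := by
  have h := congrArg (Nat.cast : ℕ → ℝ) (natkey1 x r)
  rw [show x+r+1 = x+1+r by omega] at h
  rw [show ((x+1+r).choose (r+1)) = ((x+(r+1)).choose (r+1)) from by rw [show x+1+r = x+(r+1) by omega]] at h
  push_cast at h
  linarith

lemma rkey2 (N k : ℕ) : ((N:ℝ)+1) * (N.choose k : ℝ) = ((k:ℝ)+1) * ((N+1).choose (k+1) : ℝ) := by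
  have h := congrArg (Nat.cast : ℕ → ℝ) (natkey2 N k)
  push_cast at h
  linarith

lemma sum_key (x m : ℕ) (a : ℝ) :
    ((x:ℝ)+1) * (a * ∑ r ∈ Finset.range (m+1),
        ((x+m+4).choose (m-r) : ℝ) * ((x+1+r).choose r : ℝ) * (-1)^r * a^r)
    + ((m:ℝ)+1) * (∑ r ∈ Finset.range (m+2),
        ((x+m+4).choose (m+1-r) : ℝ) * ((x+r).choose r : ℝ) * (-1)^r * a^r)
    = ((x:ℝ)+(m:ℝ)+4) * (∑ r ∈ Finset.range (m+1),
        ((x+m+3).choose (m-r) : ℝ) * ((x+r).choose r : ℝ) * (-1)^r * a^r) := by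
  rw [Finset.sum_range_succ' (fun r => ((x+m+4).choose (m+1-r) : ℝ) * ((x+r).choose r : ℝ) * (-1)^r * a^r) (m+1)]
  rw [Finset.sum_range_succ' (fun r => ((x+m+3).choose (m-r) : ℝ) * ((x+r).choose r : ℝ) * (-1)^r * a^r) m]
  simp only [Finset.mul_sum, mul_add]
  have hEF : (∑ r ∈ Finset.range (m+1),
        ((x:ℝ)+1) * (a * (((x+m+4).choose (m-r) : ℝ) * ((x+1+r).choose r : ℝ) * (-1)^r * a^r)))
      + (∑ r ∈ Finset.range (m+1),
        ((m:ℝ)+1) * (((x+m+4).choose (m+1-(r+1)) : ℝ) * ((x+(r+1)).choose (r+1) : ℝ) * (-1)^(r+1) * a^(r+1)))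
      = ∑ r ∈ Finset.range (m+1),
      (((x:ℝ)+1) * (a * (((x+m+4).choose (m-r) : ℝ) * ((x+1+r).choose r : ℝ) * (-1)^r * a^r))
        + ((m:ℝ)+1) * (((x+m+4).choose (m+1-(r+1)) : ℝ) * ((x+(r+1)).choose (r+1) : ℝ) * (-1)^(r+1) * a^(r+1))) := by
    rw [Finset.sum_add_distrib]
  have hpeel := Finset.sum_range_succ (fun r =>
      (((x:ℝ)+1) * (a * (((x+m+4).choose (m-r) : ℝ) * ((x+1+r).choose r : ℝ) * (-1)^r * a^r))
        + ((m:ℝ)+1) * (((x+m+4).choose (m+1-(r+1)) : ℝ) * ((x+(r+1)).choose (r+1) : ℝ) * (-1)^(r+1) * a^(r+1)))) m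
  -- boundary r = 0 terms
  have hb : ((m:ℝ)+1) * (((x+m+4).choose (m+1-0) : ℝ) * ((x+0).choose 0 : ℝ) * (-1)^0 * a^0)
      = ((x:ℝ)+(m:ℝ)+4) * (((x+m+3).choose (m-0) : ℝ) * ((x+0).choose 0 : ℝ) * (-1)^0 * a^0) := by
    have h := rkey2 (x+m+3) m
    rw [show (x+m+3)+1 = x+m+4 from rfl] at h
    simp only [Nat.sub_zero, Nat.choose_zero_right, pow_zero, Nat.cast_one, mul_one]
    push_cast at h ⊢
    linarith
  -- top terms cancel
  have hlast : ((x:ℝ)+1) * (a * (((x+m+4).choose (m-m) : ℝ) * ((x+1+m).choose m : ℝ) * (-1)^m * a^m))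
      + ((m:ℝ)+1) * (((x+m+4).choose (m+1-(m+1)) : ℝ) * ((x+(m+1)).choose (m+1) : ℝ) * (-1)^(m+1) * a^(m+1)) = 0 := by
    simp only [Nat.sub_self, Nat.add_sub_cancel, Nat.choose_zero_right, Nat.cast_one, one_mul]
    have h := rkey1 x m
    rw [pow_succ, pow_succ]
    linear_combination (a * (-1)^m * a^m) * h
  -- remaining termwise identity
  have hsum : ∑ r ∈ Finset.range m,
      (((x:ℝ)+1) * (a * (((x+m+4).choose (m-r) : ℝ) * ((x+1+r).choose r : ℝ) * (-1)^r * a^r))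
        + ((m:ℝ)+1) * (((x+m+4).choose (m+1-(r+1)) : ℝ) * ((x+(r+1)).choose (r+1) : ℝ) * (-1)^(r+1) * a^(r+1)))
      = ∑ r ∈ Finset.range m,
        ((x:ℝ)+(m:ℝ)+4) * (((x+m+3).choose (m-(r+1)) : ℝ) * ((x+(r+1)).choose (r+1) : ℝ) * (-1)^(r+1) * a^(r+1)) := by
    refine Finset.sum_congr rfl fun r hr => ?_
    have hrm : r < m := Finset.mem_range.mp hr
    obtain ⟨s, rfl⟩ : ∃ s, m = r + s + 1 := ⟨m - r - 1, by omega⟩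
    simp only [show r+s+1 - r = s+1 by omega, show r+s+1+1-(r+1) = s+1 by omega,
      show r+s+1-(r+1) = s by omega]
    have h1 := rkey1 x r
    have h2 := rkey2 (x+(r+s+1)+3) s
    rw [show ((x+(r+s+1)+3+1).choose (s+1) : ℝ) = ((x+(r+s+1)+4).choose (s+1) : ℝ) from rfl] at h2
    rw [pow_succ, pow_succ]
    push_cast at h1 h2 ⊢
    linear_combination ((((x+(r+s+1)+4).choose (s+1) : ℝ)) * a * (-1)^r * a^r) * h1
      + ((((x+(r+1)).choose (r+1) : ℝ)) * a * (-1)^r * a^r) * h2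
  linarith [hEF, hpeel, hsum, hlast, hb]

lemma corebin (n : ℕ) (a : ℝ) :
    (1-a)^(n+3) = (∑ j ∈ Finset.range (n+2), ((n+3).choose (n+1-j) : ℝ) * (-1)^j * a^(j+2))
      + 1 - ((n:ℝ)+3)*a := by
  rw [show (1-a:ℝ) = (-a+1) by ring, add_pow, Finset.sum_range_succ', Finset.sum_range_succ']
  have h : ∀ j ∈ Finset.range (n+2), (-a)^(j+1+1) * (1:ℝ)^(n+3-(j+1+1)) * ((n+3).choose (j+1+1) : ℝ)
      = ((n+3).choose (n+1-j) : ℝ) * (-1)^j * a^(j+2) := by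
    intro j hj
    have hj' : j < n+2 := Finset.mem_range.mp hj
    rw [show (n+3).choose (j+1+1) = (n+3).choose (n+1-j) from by
      rw [← Nat.choose_symm (show j+1+1 ≤ n+3 by omega)]; congr 1; omega]
    rw [one_pow, neg_pow, pow_succ, pow_succ]
    ring
  rw [Finset.sum_congr rfl h]
  norm_num [Nat.choose_one_right]
  ring

lemma corekey (n : ℕ) (a : ℝ) :
    2 * (∑ r ∈ Finset.range (n+1), ((n+3).choose (n-r) : ℝ) * (-1)^r * a^(r+2))
      - ((n:ℝ)+1)*((n:ℝ)+3)*a + ((n:ℝ)+1)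
    = ((n:ℝ)+1) * ((1-a)^(n+2)*(1-a))
      - (1-a) * ∑ k ∈ Finset.range (n+1), ((k:ℝ)+1) * ((n+3).choose (n-k) : ℝ) * (-1)^k * a^(k+2) := by
  rw [← pow_succ, corebin]
  have hA : 2 * (∑ r ∈ Finset.range (n+1), ((n+3).choose (n-r) : ℝ) * (-1)^r * a^(r+2))
      + (∑ k ∈ Finset.range (n+1), ((k:ℝ)+1) * ((n+3).choose (n-k) : ℝ) * (-1)^k * a^(k+2))
      = ∑ k ∈ Finset.range (n+1), ((k:ℝ)+3) * ((n+3).choose (n-k) : ℝ) * (-1)^k * a^(k+2) := by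
    rw [Finset.mul_sum, ← Finset.sum_add_distrib]
    exact Finset.sum_congr rfl fun k _ => by ring
  have hS3 : a * (∑ k ∈ Finset.range (n+1), ((k:ℝ)+1) * ((n+3).choose (n-k) : ℝ) * (-1)^k * a^(k+2))
      = ∑ k ∈ Finset.range (n+1), ((k:ℝ)+1) * ((n+3).choose (n-k) : ℝ) * (-1)^k * a^(k+3) := by
    rw [Finset.mul_sum]
    exact Finset.sum_congr rfl fun k _ => by ring
  have hB : ∑ k ∈ Finset.range (n+1), ((k:ℝ)+3) * ((n+3).choose (n-k) : ℝ) * (-1)^k * a^(k+2)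
      = (∑ k ∈ Finset.range n, ((k:ℝ)+4) * ((n+3).choose (n-(k+1)) : ℝ) * (-1)^(k+1) * a^(k+3))
        + 3 * ((n+3).choose n : ℝ) * a^2 := by
    rw [Finset.sum_range_succ' (fun k => ((k:ℝ)+3) * ((n+3).choose (n-k) : ℝ) * (-1)^k * a^(k+2)) n]
    norm_num
    exact Finset.sum_congr rfl fun k _ => by push_cast; ring
  have hT : ∑ j ∈ Finset.range (n+2), ((n+3).choose (n+1-j) : ℝ) * (-1)^j * a^(j+2)
      = (∑ j ∈ Finset.range (n+1), ((n+3).choose (n-j) : ℝ) * (-1)^(j+1) * a^(j+3))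
        + ((n+3).choose (n+1) : ℝ) * a^2 := by
    rw [Finset.sum_range_succ' (fun j => ((n+3).choose (n+1-j) : ℝ) * (-1)^j * a^(j+2)) (n+1)]
    simp only [Nat.succ_sub_succ_eq_sub, Nat.sub_zero]
    norm_num
  have hsplit : ∑ k ∈ Finset.range (n+1), (((n:ℝ)+1) - ((k:ℝ)+1)) * ((n+3).choose (n-k) : ℝ) * (-1)^(k+1) * a^(k+3)
      = ((n:ℝ)+1) * (∑ j ∈ Finset.range (n+1), ((n+3).choose (n-j) : ℝ) * (-1)^(j+1) * a^(j+3))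
        + ∑ k ∈ Finset.range (n+1), ((k:ℝ)+1) * ((n+3).choose (n-k) : ℝ) * (-1)^k * a^(k+3) := by
    rw [Finset.mul_sum, ← Finset.sum_add_distrib]
    refine Finset.sum_congr rfl fun k _ => ?_
    rw [pow_succ]
    ring
  have hE : ∑ k ∈ Finset.range (n+1), (((n:ℝ)+1) - ((k:ℝ)+1)) * ((n+3).choose (n-k) : ℝ) * (-1)^(k+1) * a^(k+3)
      = ∑ k ∈ Finset.range n, ((k:ℝ)+4) * ((n+3).choose (n-(k+1)) : ℝ) * (-1)^(k+1) * a^(k+3) := by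
    rw [Finset.sum_range_succ]
    have hz : (((n:ℝ)+1) - ((n:ℝ)+1)) * ((n+3).choose (n-n) : ℝ) * (-1)^(n+1) * a^(n+3) = 0 := by ring
    rw [hz, add_zero]
    refine Finset.sum_congr rfl fun k hk => ?_
    have hkn : k < n := Finset.mem_range.mp hk
    obtain ⟨s, rfl⟩ : ∃ s, n = k + s + 1 := ⟨n - k - 1, by omega⟩
    simp only [show k+s+1-k = s+1 by omega, show k+s+1-(k+1) = s by omega]
    have h := Nat.choose_succ_right_eq (k+s+1+3) s
    rw [show k+s+1+3-s = k+4 by omega] at h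
    have h' := congrArg (Nat.cast : ℕ → ℝ) h
    push_cast at h' ⊢
    linear_combination ((-1)^(k+1) * a^(k+3)) * h'
  have hchoose : (3:ℝ) * ((n+3).choose n : ℝ) = ((n:ℝ)+1) * ((n+3).choose (n+1) : ℝ) := by
    have h := Nat.choose_succ_right_eq (n+3) n
    rw [show n+3-n = 3 by omega] at h
    have h' := congrArg (Nat.cast : ℕ → ℝ) h
    push_cast at h'
    linarith
  linear_combination hA - hS3 - ((n:ℝ)+1) * hT + hB + a^2 * hchoose + hsplit - hE

/- ### Recurrence for `Jn` -/

lemma Jn_rec (x m : ℕ) (a : ℝ) :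
    ((x:ℝ)+1) * Jn (x+m+1) (x+1) a + ((m:ℝ)+1) * Jn (x+m+1) x a
      = ((x:ℝ)+(m:ℝ)+4) * Jn (x+m) x a := by
  unfold Jn
  simp only [show x+m+1-(x+1) = m by omega, show x+m+1-x = m+1 by omega,
    show x+m-x = m by omega, show x+m+1+3 = x+m+4 from rfl, show m+1+1 = m+2 from rfl]
  push_cast
  linear_combination (2*a^(x+2)) * sum_key x m a

/- ### Base case `x = 0` -/

lemma hck (n k : ℕ) (hkn : k ≤ n) :
    (((n:ℝ)+1)*((n:ℝ)+2)*((n:ℝ)+3)) * (n.choose k : ℝ)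
      = ((k:ℝ)+1)*((k:ℝ)+2)*((k:ℝ)+3)*((n+3).choose (n-k) : ℝ) := by
  rw [Nat.cast_choose ℝ hkn, Nat.cast_choose ℝ (show n-k ≤ n+3 by omega),
    show n+3-(n-k) = k+3 by omega]
  have e1 : ((n+3).factorial : ℝ) = ((n:ℝ)+1)*((n:ℝ)+2)*((n:ℝ)+3)*(n.factorial : ℝ) := by
    rw [show n+3 = (n+2)+1 from rfl, Nat.factorial_succ, show n+2 = (n+1)+1 from rfl,
      Nat.factorial_succ, Nat.factorial_succ]
    push_cast; ring
  have e2 : ((k+3).factorial : ℝ) = ((k:ℝ)+1)*((k:ℝ)+2)*((k:ℝ)+3)*(k.factorial : ℝ) := by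
    rw [show k+3 = (k+2)+1 from rfl, Nat.factorial_succ, show k+2 = (k+1)+1 from rfl,
      Nat.factorial_succ, Nat.factorial_succ]
    push_cast; ring
  rw [e1, e2]
  have f1 : (n.factorial:ℝ) ≠ 0 := by exact_mod_cast n.factorial_ne_zero
  have f2 : (k.factorial:ℝ) ≠ 0 := by exact_mod_cast k.factorial_ne_zero
  have f3 : (((n-k).factorial:ℕ):ℝ) ≠ 0 := by exact_mod_cast (n-k).factorial_ne_zero
  field_simp

lemma Jn_base (n : ℕ) (a : ℝ) :
    Jn n 0 a = (((n:ℝ)+1)*((n:ℝ)+2)*((n:ℝ)+3)) * (1 - a) * (In n n (1-a) - In n 0 a) := by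
  rw [In_self, In_zero]
  have hq : (((n:ℝ)+1)*((n:ℝ)+2)*((n:ℝ)+3)) * (a^2 * ∑ k ∈ Finset.range (n+1),
        (n.choose k : ℝ) * (-1)^k * a^k / (((k:ℝ)+2) * ((k:ℝ)+3)))
      = ∑ k ∈ Finset.range (n+1), ((k:ℝ)+1)*((n+3).choose (n-k):ℝ)*(-1)^k*a^(k+2) := by
    rw [Finset.mul_sum, Finset.mul_sum]
    refine Finset.sum_congr rfl fun k hk => ?_
    have hkn : k ≤ n := by have := Finset.mem_range.mp hk; omega
    have hc := hck n k hkn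
    have h2 : ((k:ℝ)+2) ≠ 0 := by positivity
    have h3 : ((k:ℝ)+3) ≠ 0 := by positivity
    field_simp
    linear_combination (a^(k+2)) * hc
  have hcc : (((n:ℝ)+1)*((n:ℝ)+2)*((n:ℝ)+3)) * ((1-a)^(n+2)/(((n:ℝ)+2)*((n:ℝ)+3)))
      = ((n:ℝ)+1)*(1-a)^(n+2) := by
    have h2 : ((n:ℝ)+2) ≠ 0 := by positivity
    have h3 : ((n:ℝ)+3) ≠ 0 := by positivity
    field_simp
  unfold Jn
  simp only [Nat.sub_zero, zero_add, Nat.choose_self, Nat.cast_one, mul_one, Nat.cast_zero]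
  have hp : a^(0+2) * ∑ r ∈ Finset.range (n+1), ((n+3).choose (n-r):ℝ)*(-1)^r*a^r
      = ∑ r ∈ Finset.range (n+1), ((n+3).choose (n-r):ℝ)*(-1)^r*a^(r+2) := by
    rw [Finset.mul_sum]; exact Finset.sum_congr rfl fun r _ => by ring
  linear_combination corekey n a + 2*hp + (1-a)*hq - (1-a)*hcc

lemma base0 (N : ℕ) (a : ℝ) :
    Jn N 0 a = (((N + 3).factorial : ℝ) / (((0:ℕ).factorial : ℝ) * ((N - 0).factorial : ℝ)))
      * (1 - a) * (In N (N - 0) (1 - a) - In N 0 a) := by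
  rw [Jn_base]
  simp only [Nat.sub_zero, Nat.factorial_zero, Nat.cast_one, one_mul]
  have hc : (((N + 3).factorial : ℝ) / ((N.factorial : ℝ)))
      = ((N:ℝ)+1)*((N:ℝ)+2)*((N:ℝ)+3) := by
    rw [show N+3 = (N+2)+1 from rfl, Nat.factorial_succ, show N+2 = (N+1)+1 from rfl,
      Nat.factorial_succ, Nat.factorial_succ]
    have f1 : (N.factorial:ℝ) ≠ 0 := by exact_mod_cast N.factorial_ne_zero
    field_simp
    push_cast
    ring
  rw [hc]

/-- `J_n(a, x) = ((n+3)!/(x!(n−x)!)) (1 − a) (I_n(1 − a, n − x) − I_n(a, x))`. -/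
theorem Jn_eq_In_diff (n x : ℕ) (hx : x ≤ n) (a : ℝ) :
    Jn n x a = (((n + 3).factorial : ℝ) / ((x.factorial : ℝ) * ((n - x).factorial : ℝ)))
      * (1 - a) * (In n (n - x) (1 - a) - In n x a) := by
  revert hx
  induction n generalizing x a with
  | zero =>
    intro hx
    obtain rfl : x = 0 := by omega
    exact base0 0 a
  | succ n ih =>
    induction x generalizing a with
    | zero =>
      intro _
      exact base0 (n+1) a
    | succ x ihx =>
      intro hx1
      have hxn : x ≤ n := by omega
      obtain ⟨d, rfl⟩ : ∃ d, n = x + d := ⟨n - x, by omega⟩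
      simp only [show x+d+1-(x+1) = d by omega, show (x+1).factorial = (x+1)*x.factorial from rfl]
      have h1 := ih x a hxn
      have h2 := ihx a (by omega)
      simp only [show x+d-x = d by omega, show x+d+1-x = d+1 by omega] at h1 h2
      have hK : In (x+d+1) (x+1) a = In (x+d) x a - In (x+d+1) x a := In_rec (x+d) x (by omega) a
      have hL : In (x+d+1) d (1-a) = In (x+d) d (1-a) - In (x+d+1) (d+1) (1-a) := by
        have h := In_rec (x+d) d (by omega) (1-a)
        linarith
      have hJ := Jn_rec x d a
      have f0 : (x.factorial:ℝ) ≠ 0 := by exact_mod_cast x.factorial_ne_zero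
      have fd : (d.factorial:ℝ) ≠ 0 := by exact_mod_cast d.factorial_ne_zero
      have hx1ne : ((x:ℝ)+1) ≠ 0 := by positivity
      have eA : (((x+d+1+3).factorial:ℕ):ℝ) = ((x:ℝ)+(d:ℝ)+4) * (((x+d+3).factorial:ℕ):ℝ) := by
        rw [show x+d+1+3 = (x+d+3)+1 from rfl, Nat.factorial_succ (x+d+3)]
        push_cast
        ring
      have eB : (((d+1).factorial:ℕ):ℝ) = ((d:ℝ)+1) * ((d.factorial:ℕ):ℝ) := by
        rw [Nat.factorial_succ d]
        push_cast
        ring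
      have cA : ((x:ℝ)+(d:ℝ)+4) * (((x+d+3).factorial:ℝ)/((x.factorial:ℝ)*(d.factorial:ℝ)))
          = ((x:ℝ)+1) * (((x+d+1+3).factorial:ℝ)/((((x:ℝ)+1)*(x.factorial:ℝ))*(d.factorial:ℝ))) := by
        rw [eA]
        field_simp
      have cB : ((d:ℝ)+1) * (((x+d+1+3).factorial:ℝ)/((x.factorial:ℝ)*((d+1).factorial:ℝ)))
          = ((x:ℝ)+1) * (((x+d+1+3).factorial:ℝ)/((((x:ℝ)+1)*(x.factorial:ℝ))*(d.factorial:ℝ))) := by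
        rw [eB]
        field_simp
      apply mul_left_cancel₀ hx1ne
      push_cast at h1 h2 hJ ⊢
      linear_combination hJ + ((x:ℝ)+(d:ℝ)+4)*h1 - ((d:ℝ)+1)*h2
        + ((1-a)*(In (x+d) d (1-a) - In (x+d) x a))*cA
        - ((1-a)*(In (x+d+1) (d+1) (1-a) - In (x+d+1) x a))*cB
        - (((x:ℝ)+1) * (((x+d+1+3).factorial:ℝ)/((((x:ℝ)+1)*(x.factorial:ℝ))*(d.factorial:ℝ))) * (1-a)) * hL
        + (((x:ℝ)+1) * (((x+d+1+3).factorial:ℝ)/((((x:ℝ)+1)*(x.factorial:ℝ))*(d.factorial:ℝ))) * (1-a)) * hK
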